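/- Fix 0 < b < 1, β₁ = √((1−b)/(2b)), β₂ = √((1+b)/(2b)), X₁ = diag(1,1,1,1,0), S as in the previous construction, and X₂ = 0. Then the 10×10 matrix ϱ₀ = X†X with X = [[X₁, SX₁],[0, 0]] is an SPPT state (i.e., positive semidefinite with partial transpose of the form Y†Y where Y = [[X₁, S†X₁],[0,0]]) that is not separable on ℂ²⊗ℂ⁵. -/

import Mathlib

open Matrix Kronecker Finset ComplexOrder

/-- 2x2 block matrix with n×n blocks, indexed by `Fin 2 × n`. -/
def blk {n : Type*} (A B C D : Matrix n n ℂ) :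
    Matrix (Fin 2 × n) (Fin 2 × n) ℂ := fun p q =>
  if p.1 = 0 then (if q.1 = 0 then A p.2 q.2 else B p.2 q.2)
  else (if q.1 = 0 then C p.2 q.2 else D p.2 q.2)

/-- Partial transpose on the first (qubit) factor. -/
def ptA {n : Type*} (ρ : Matrix (Fin 2 × n) (Fin 2 × n) ℂ) :
    Matrix (Fin 2 × n) (Fin 2 × n) ℂ := fun p q => ρ (q.1, p.2) (p.1, q.2)

/-- Separability of an (unnormalized) state on ℂ²⊗ℂⁿ. -/
def SepState {n : Type*} [Fintype n] (ρ : Matrix (Fin 2 × n) (Fin 2 × n) ℂ) : Prop :=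
  ∃ (N : ℕ) (σ : Fin N → Matrix (Fin 2) (Fin 2) ℂ) (P : Fin N → Matrix n n ℂ),
    (∀ i, (σ i).PosSemidef) ∧ (∀ i, (P i).PosSemidef) ∧ ρ = ∑ i, σ i ⊗ₖ P i

namespace Stmt14Aux

variable {n : Type*} [Fintype n] [DecidableEq n]

lemma blk_ct_mul (A B : Matrix n n ℂ) :
    (blk A B 0 0)ᴴ * blk A B 0 0 = blk (Aᴴ*A) (Aᴴ*B) (Bᴴ*A) (Bᴴ*B) := by
  ext ⟨i, j⟩ ⟨k, l⟩
  simp only [Matrix.mul_apply, conjTranspose_apply, blk, Fintype.sum_prod_type,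
    Fin.sum_univ_two, Matrix.zero_apply]
  fin_cases i <;> fin_cases k <;>
    simp [Matrix.mul_apply, conjTranspose_apply]

lemma ptA_blk (A B C D : Matrix n n ℂ) : ptA (blk A B C D) = blk A C B D := by
  ext ⟨i, j⟩ ⟨k, l⟩
  fin_cases i <;> fin_cases k <;> simp [ptA, blk]

/-- embed a pair of vectors as a vector on `Fin 2 × n`. -/
def zvec (u v : n → ℂ) : Fin 2 × n → ℂ := fun p => if p.1 = 0 then u p.2 else v p.2

lemma blk_mulVec (A B : Matrix n n ℂ) (u v : n → ℂ)
    (h : A.mulVec u + B.mulVec v = 0) :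
    (blk A B 0 0).mulVec (zvec u v) = 0 := by
  ext ⟨i, j⟩
  have h' := congrFun h j
  simp only [Pi.add_apply, Pi.zero_apply, Matrix.mulVec, dotProduct] at h'
  fin_cases i <;>
    simp only [Matrix.mulVec, dotProduct, Fintype.sum_prod_type, Fin.sum_univ_two,
      blk, zvec, Pi.zero_apply] <;>
    simp [h']

lemma kron_ct (A : Matrix (Fin 2) (Fin 2) ℂ) (B : Matrix n n ℂ) :
    (A ⊗ₖ B)ᴴ = Aᴴ ⊗ₖ Bᴴ := by
  ext ⟨i, j⟩ ⟨k, l⟩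
  simp [conjTranspose_apply, mul_comm]

lemma kron_psd {A : Matrix (Fin 2) (Fin 2) ℂ} {B : Matrix n n ℂ}
    (hA : A.PosSemidef) (hB : B.PosSemidef) : (A ⊗ₖ B).PosSemidef := by
  exact hA.kronecker hB

lemma term_mulVec_zero {m : Type*} [Fintype m] [DecidableEq m] {N : ℕ}
    (M : Fin N → Matrix m m ℂ) (hM : ∀ i, (M i).PosSemidef) (z : m → ℂ)
    (h : (∑ i, M i).mulVec z = 0) (i : Fin N) : (M i).mulVec z = 0 := by
  have hmv : (∑ j, M j).mulVec z = ∑ j, (M j).mulVec z := by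
    ext k
    simp [Matrix.mulVec, dotProduct, Matrix.sum_apply, Finset.sum_mul]
    exact Finset.sum_comm
  have hdp : star z ⬝ᵥ (∑ j, (M j).mulVec z) = ∑ j, star z ⬝ᵥ (M j).mulVec z := by
    simp [dotProduct, Finset.sum_apply, Finset.mul_sum]
    exact Finset.sum_comm
  have hsum : ∑ j, star z ⬝ᵥ (M j).mulVec z = 0 := by
    rw [← hdp, ← hmv, h, dotProduct_zero]
  have hterm : star z ⬝ᵥ (M i).mulVec z = 0 :=
    (Finset.sum_eq_zero_iff_of_nonneg (fun j _ => (hM j).dotProduct_mulVec_nonneg z)).mp hsum i (Finset.mem_univ i)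
  exact ((hM i).dotProduct_mulVec_zero_iff z).mp hterm

lemma ptA_sum {N : ℕ} (σ : Fin N → Matrix (Fin 2) (Fin 2) ℂ)
    (P : Fin N → Matrix n n ℂ) :
    ptA (∑ i, σ i ⊗ₖ P i) = ∑ i, (σ i)ᵀ ⊗ₖ P i := by
  ext p q
  simp [ptA, Matrix.sum_apply]

lemma core {β₁ β₂ a c e x₀ x₁ x₂ x₃ : ℂ} (hβ₁ : β₁ ≠ 0)
    (h1 : a*x₀ = c*x₁) (h2 : a*x₁ = c*x₂) (h3 : a*x₂ = e*x₁) (h4 : a*x₃ = e*x₂)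
    (h5 : a*β₂*x₂ + c*(β₁*x₀ - β₂*x₃) = 0) : a*x₀ = 0 := by
  by_cases ha : a = 0
  · rw [ha, zero_mul]
  have key : β₁*a*(c^2*x₁) = 0 := by
    linear_combination a^2*h5 - a^2*β₂*h3 - a*c*β₁*h1 + a*c*β₂*h4 - a*β₂*e*h2
  have hc : c^2*x₁ = 0 := by
    rcases mul_eq_zero.mp key with h | h
    · rcases mul_eq_zero.mp h with h' | h'
      · exact absurd h' hβ₁
      · exact absurd h' ha
    · exact h
  have hsq : (a*x₀)^2 = 0 := by
    linear_combination (a*x₀ + c*x₁)*h1 + x₁*hc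
  exact pow_eq_zero_iff two_ne_zero |>.mp hsq


section Concrete

/-- the matrix `S` as a literal, with complex parameters. -/
noncomputable def Sm (c₁ c₂ : ℂ) : Matrix (Fin 5) (Fin 5) ℂ :=
  !![0, 1, 0, 0, c₁;
     0, 0, 1, 0, 0;
     0, 0, 0, 1, 0;
     0, 0, 0, 0, c₂;
     c₂, 0, 0, c₁, 0]

noncomputable def X1m : Matrix (Fin 5) (Fin 5) ℂ := Matrix.diagonal ![1, 1, 1, 1, 0]

noncomputable def SXm (c₁ c₂ : ℂ) : Matrix (Fin 5) (Fin 5) ℂ :=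
  !![0, 1, 0, 0, 0;
     0, 0, 1, 0, 0;
     0, 0, 0, 1, 0;
     0, 0, 0, 0, 0;
     c₂, 0, 0, c₁, 0]

noncomputable def SHXm (c₁ c₂ : ℂ) : Matrix (Fin 5) (Fin 5) ℂ :=
  !![0, 0, 0, 0, 0;
     1, 0, 0, 0, 0;
     0, 1, 0, 0, 0;
     0, 0, 1, 0, 0;
     c₁, 0, 0, c₂, 0]

set_option maxHeartbeats 1000000 in
lemma SX_eval (c₁ c₂ : ℂ) : Sm c₁ c₂ * X1m = SXm c₁ c₂ := by
  ext i j
  fin_cases i <;> fin_cases j <;>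
    simp [Sm, X1m, SXm, Matrix.mul_apply, Fin.sum_univ_five, Matrix.diagonal,
      Matrix.vecHead, Matrix.vecTail]

set_option maxHeartbeats 1000000 in
lemma SHX_eval (c₁ c₂ : ℂ) (h₁ : (starRingEnd ℂ) c₁ = c₁) (h₂ : (starRingEnd ℂ) c₂ = c₂) :
    (Sm c₁ c₂)ᴴ * X1m = SHXm c₁ c₂ := by
  ext i j
  fin_cases i <;> fin_cases j <;>
    simp [Sm, X1m, SHXm, Matrix.mul_apply, Fin.sum_univ_five, Matrix.diagonal,
      conjTranspose_apply, Matrix.vecHead, Matrix.vecTail, h₁, h₂]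

set_option maxHeartbeats 1000000 in
lemma X1_herm : X1mᴴ = X1m := by
  ext i j
  fin_cases i <;> fin_cases j <;>
    simp [X1m, Matrix.diagonal, conjTranspose_apply, Matrix.vecHead, Matrix.vecTail]

set_option maxHeartbeats 4000000 in
lemma BB_eval (c₁ c₂ : ℂ) (h₁ : (starRingEnd ℂ) c₁ = c₁) (h₂ : (starRingEnd ℂ) c₂ = c₂)
    (hkey : c₂^2 = c₁^2 + 1) :
    (SXm c₁ c₂)ᴴ * SXm c₁ c₂ = (SHXm c₁ c₂)ᴴ * SHXm c₁ c₂ := by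
  ext i j
  fin_cases i <;> fin_cases j <;>
    simp [SXm, SHXm, Matrix.mul_apply, Fin.sum_univ_five, conjTranspose_apply,
      Matrix.vecHead, Matrix.vecTail, h₁, h₂] <;>
    first
      | ring1
      | linear_combination hkey
      | linear_combination -hkey
      | linear_combination 2*hkey
      | linear_combination -2*hkey

set_option maxHeartbeats 1000000 in
lemma X1_mv (u : Fin 5 → ℂ) : X1m.mulVec u = ![u 0, u 1, u 2, u 3, 0] := by
  funext j
  fin_cases j <;>
    simp [X1m, Matrix.mulVec, dotProduct, Fin.sum_univ_five, Matrix.diagonal,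
      Matrix.vecHead, Matrix.vecTail]

set_option maxHeartbeats 1000000 in
lemma kz1 (c₁ c₂ : ℂ) :
    X1m.mulVec ![0,0,c₂,0,0] + (SXm c₁ c₂).mulVec ![c₁,0,0,-c₂,0] = 0 := by
  rw [X1_mv]
  funext j
  fin_cases j <;>
    simp [SXm, Matrix.mulVec, dotProduct, Fin.sum_univ_five,
      Matrix.vecHead, Matrix.vecTail] <;> ring

set_option maxHeartbeats 1000000 in
lemma kz2 (c₁ c₂ : ℂ) :
    X1m.mulVec ![-1,0,0,0,0] + (SXm c₁ c₂).mulVec ![0,1,0,0,0] = 0 := by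
  rw [X1_mv]
  funext j
  fin_cases j <;>
    simp [SXm, Matrix.mulVec, dotProduct, Fin.sum_univ_five,
      Matrix.vecHead, Matrix.vecTail]

set_option maxHeartbeats 1000000 in
lemma kz3 (c₁ c₂ : ℂ) :
    X1m.mulVec ![0,-1,0,0,0] + (SXm c₁ c₂).mulVec ![0,0,1,0,0] = 0 := by
  rw [X1_mv]
  funext j
  fin_cases j <;>
    simp [SXm, Matrix.mulVec, dotProduct, Fin.sum_univ_five,
      Matrix.vecHead, Matrix.vecTail]

set_option maxHeartbeats 1000000 in
lemma kz2' (c₁ c₂ : ℂ) :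
    X1m.mulVec ![0,0,-1,0,0] + (SHXm c₁ c₂).mulVec ![0,1,0,0,0] = 0 := by
  rw [X1_mv]
  funext j
  fin_cases j <;>
    simp [SHXm, Matrix.mulVec, dotProduct, Fin.sum_univ_five,
      Matrix.vecHead, Matrix.vecTail]

set_option maxHeartbeats 1000000 in
lemma kz3' (c₁ c₂ : ℂ) :
    X1m.mulVec ![0,0,0,-1,0] + (SHXm c₁ c₂).mulVec ![0,0,1,0,0] = 0 := by
  rw [X1_mv]
  funext j
  fin_cases j <;>
    simp [SHXm, Matrix.mulVec, dotProduct, Fin.sum_univ_five,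
      Matrix.vecHead, Matrix.vecTail]

set_option maxHeartbeats 1000000 in
lemma X1sq_entry : (X1mᴴ * X1m) 0 0 = 1 := by
  simp [X1m, Matrix.mul_apply, Fin.sum_univ_five, Matrix.diagonal, conjTranspose_apply,
    Matrix.vecHead, Matrix.vecTail]

end Concrete

end Stmt14Aux

open Stmt14Aux

set_option maxHeartbeats 1000000 in
theorem stmt14 (b : ℝ) (hb0 : 0 < b) (hb1 : b < 1)
    (β₁ β₂ : ℝ) (hβ₁ : β₁ = Real.sqrt ((1 - b) / (2 * b)))
    (hβ₂ : β₂ = Real.sqrt ((1 + b) / (2 * b)))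
    (X₁ S : Matrix (Fin 5) (Fin 5) ℂ)
    (hX₁ : X₁ = Matrix.diagonal ![1, 1, 1, 1, 0])
    (hS : S = !![0, 1, 0, 0, (β₁ : ℂ);
                 0, 0, 1, 0, 0;
                 0, 0, 0, 1, 0;
                 0, 0, 0, 0, (β₂ : ℂ);
                 (β₂ : ℂ), 0, 0, (β₁ : ℂ), 0])
    (ϱ₀ : Matrix (Fin 2 × Fin 5) (Fin 2 × Fin 5) ℂ)
    (hϱ₀ : ϱ₀ = (blk X₁ (S * X₁) 0 0)ᴴ * blk X₁ (S * X₁) 0 0) :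
    ϱ₀.PosSemidef ∧
    ptA ϱ₀ = (blk X₁ (Sᴴ * X₁) 0 0)ᴴ * blk X₁ (Sᴴ * X₁) 0 0 ∧
    ¬ SepState ϱ₀ := by
  -- basic facts about β₁, β₂
  have h2b : (0:ℝ) < 2 * b := by linarith
  have hβ₁pos : 0 < β₁ := by
    rw [hβ₁]; exact Real.sqrt_pos.mpr (div_pos (by linarith) h2b)
  have hβ₁sq : β₁^2 = (1 - b) / (2 * b) := by
    rw [hβ₁, Real.sq_sqrt (le_of_lt (div_pos (by linarith) h2b))]
  have hβ₂sq : β₂^2 = (1 + b) / (2 * b) := by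
    rw [hβ₂, Real.sq_sqrt (le_of_lt (div_pos (by linarith) h2b))]
  have hkeyR : β₂^2 = β₁^2 + 1 := by
    rw [hβ₁sq, hβ₂sq]; field_simp; ring
  have hkeyC : (β₂:ℂ)^2 = (β₁:ℂ)^2 + 1 := by
    exact_mod_cast congrArg (fun x : ℝ => (x:ℂ)) hkeyR
  have hβ₁ne : (β₁:ℂ) ≠ 0 := Complex.ofReal_ne_zero.mpr (ne_of_gt hβ₁pos)
  have hst1 : (starRingEnd ℂ) ((β₁:ℝ):ℂ) = ((β₁:ℝ):ℂ) := Complex.conj_ofReal β₁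
  have hst2 : (starRingEnd ℂ) ((β₂:ℝ):ℂ) = ((β₂:ℝ):ℂ) := Complex.conj_ofReal β₂
  have hSeq : S = Sm (β₁:ℂ) (β₂:ℂ) := by rw [hS]; rfl
  have hXeq : X₁ = X1m := by rw [hX₁]; rfl
  have hSX : S * X₁ = SXm (β₁:ℂ) (β₂:ℂ) := by rw [hSeq, hXeq, SX_eval]
  have hSHX : Sᴴ * X₁ = SHXm (β₁:ℂ) (β₂:ℂ) := by
    rw [hSeq, hXeq, SHX_eval _ _ hst1 hst2]
  have hX₁H : X₁ᴴ = X₁ := by rw [hXeq]; exact X1_herm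
  have hAB : X₁ᴴ * (S * X₁) = (Sᴴ * X₁)ᴴ * X₁ := by
    rw [conjTranspose_mul, conjTranspose_conjTranspose, hX₁H, Matrix.mul_assoc]
  have hBA : (S * X₁)ᴴ * X₁ = X₁ᴴ * (Sᴴ * X₁) := by
    rw [conjTranspose_mul, hX₁H, Matrix.mul_assoc]
  have hBB : (S * X₁)ᴴ * (S * X₁) = (Sᴴ * X₁)ᴴ * (Sᴴ * X₁) := by
    rw [hSX, hSHX]
    exact BB_eval _ _ hst1 hst2 hkeyC
  have hpt : ptA ϱ₀ = (blk X₁ (Sᴴ * X₁) 0 0)ᴴ * blk X₁ (Sᴴ * X₁) 0 0 := by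
    rw [hϱ₀, blk_ct_mul, ptA_blk, blk_ct_mul, hAB, hBA, hBB]
  refine ⟨hϱ₀ ▸ posSemidef_conjTranspose_mul_self _, hpt, ?_⟩
  -- non-separability
  rintro ⟨N, σ, P, hσ, hP, hsum⟩
  have hϱ₀' : ϱ₀ = (blk X1m (SXm (β₁:ℂ) (β₂:ℂ)) 0 0)ᴴ * blk X1m (SXm (β₁:ℂ) (β₂:ℂ)) 0 0 := by
    rw [hϱ₀, hSX, hXeq]
  have hpt' : ptA ϱ₀ =
      (blk X1m (SHXm (β₁:ℂ) (β₂:ℂ)) 0 0)ᴴ * blk X1m (SHXm (β₁:ℂ) (β₂:ℂ)) 0 0 := by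
    rw [hpt, hSHX, hXeq]
  -- every term of a separable decomposition kills the kernel vectors of ϱ₀
  have hker : ∀ u v : Fin 5 → ℂ, X1m.mulVec u + (SXm (β₁:ℂ) (β₂:ℂ)).mulVec v = 0 →
      ∀ i, ((σ i) ⊗ₖ (P i)).mulVec (zvec u v) = 0 := by
    intro u v huv i
    refine term_mulVec_zero _ (fun j => kron_psd (hσ j) (hP j)) _ ?_ i
    rw [← hsum, hϱ₀', ← Matrix.mulVec_mulVec, blk_mulVec _ _ _ _ huv, Matrix.mulVec_zero]
  have hker' : ∀ u v : Fin 5 → ℂ, X1m.mulVec u + (SHXm (β₁:ℂ) (β₂:ℂ)).mulVec v = 0 →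
      ∀ i, ((σ i)ᵀ ⊗ₖ (P i)).mulVec (zvec u v) = 0 := by
    intro u v huv i
    refine term_mulVec_zero _ (fun j => kron_psd (hσ j).transpose (hP j)) _ ?_ i
    rw [← ptA_sum, ← hsum, hpt', ← Matrix.mulVec_mulVec, blk_mulVec _ _ _ _ huv,
      Matrix.mulVec_zero]
  -- for each i, the ((0,0),(0,0)) entry of σ i ⊗ P i vanishes
  have hzero : ∀ i, σ i 0 0 * P i 0 0 = 0 := by
    intro i
    have e1 := congrFun (hker _ _ (kz1 (β₁:ℂ) (β₂:ℂ)) i) (0, 0)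
    have e2 := congrFun (hker _ _ (kz2 (β₁:ℂ) (β₂:ℂ)) i) (0, 0)
    have e3 := congrFun (hker _ _ (kz3 (β₁:ℂ) (β₂:ℂ)) i) (0, 0)
    have e2' := congrFun (hker' _ _ (kz2' (β₁:ℂ) (β₂:ℂ)) i) (0, 0)
    have e3' := congrFun (hker' _ _ (kz3' (β₁:ℂ) (β₂:ℂ)) i) (0, 0)
    simp [Matrix.mulVec, dotProduct, Fintype.sum_prod_type, Fin.sum_univ_two,
      Fin.sum_univ_five, kroneckerMap_apply, zvec, Matrix.vecHead,
      Matrix.vecTail] at e1 e2 e3 e2' e3'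
    refine core (β₁ := (β₁:ℂ)) (β₂ := (β₂:ℂ)) (a := σ i 0 0) (c := σ i 0 1)
      (e := σ i 1 0) (x₀ := P i 0 0) (x₁ := P i 0 1) (x₂ := P i 0 2) (x₃ := P i 0 3)
      hβ₁ne ?_ ?_ ?_ ?_ ?_
    · linear_combination -e2
    · linear_combination -e3
    · linear_combination -e2'
    · linear_combination -e3'
    · linear_combination e1
  -- contradiction with the ((0,0),(0,0)) entry of ϱ₀
  have hentry := congrFun (congrFun hsum ((0:Fin 2), (0:Fin 5))) ((0:Fin 2), (0:Fin 5))
  rw [hϱ₀', blk_ct_mul] at hentry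
  have hL : blk (X1mᴴ*X1m) (X1mᴴ*(SXm (β₁:ℂ) (β₂:ℂ)))
      ((SXm (β₁:ℂ) (β₂:ℂ))ᴴ*X1m) ((SXm (β₁:ℂ) (β₂:ℂ))ᴴ*(SXm (β₁:ℂ) (β₂:ℂ)))
      ((0:Fin 2), (0:Fin 5)) ((0:Fin 2), (0:Fin 5)) = 1 := by
    show (X1mᴴ*X1m) 0 0 = 1
    exact X1sq_entry
  rw [hL, Matrix.sum_apply] at hentry
  have hR : ∑ i, (σ i ⊗ₖ P i) ((0:Fin 2), (0:Fin 5)) ((0:Fin 2), (0:Fin 5)) = 0 := by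
    refine Finset.sum_eq_zero fun i _ => ?_
    simpa [kroneckerMap_apply] using hzero i
  exact one_ne_zero (hentry.trans hR)
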